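/- arXiv:2603.22124 — 3 statements merged into one kernel-verified Lean document; each statement's English description precedes it below -/
import Mathlib

section
/- For all positive integers M and q with M ≥ 1, ∑_{(m,m₁,ℓ): m·m₁·ℓ ≤ M, m, m₁, ℓ pairwise coprime, gcd(m·m₁·ℓ, q) = 1} μ(m)·τ(m)·μ²(m₁)·μ²(ℓ)/(φ(m)·φ(m₁)·φ(ℓ)) = 1, where the sum runs over ordered triples of positive integers (m,m₁,ℓ) and τ(m) is the number of divisors of m. -/
open scoped Real
open Complex

noncomputable section

/-- Value of the Dirichlet `L`-function at the central point `1/2`. -/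
def Lhalf {q : ℕ} (χ : DirichletCharacter ℂ q) : ℂ :=
  if h : q = 0 then 0 else
    haveI : NeZero q := ⟨h⟩
    DirichletCharacter.LFunction χ (1 / 2)

/-- The root number `ε(χ) = q^{-1/2} ∑_{t mod q} χ(t) e(t/q)`. -/
def rootNumber {q : ℕ} (χ : DirichletCharacter ℂ q) : ℂ :=
  if h : q = 0 then 0 else
    haveI : NeZero q := ⟨h⟩
    (Real.sqrt q)⁻¹ *
      ∑ t : ZMod q, χ t * Complex.exp (2 * Real.pi * Complex.I * (t.val : ℝ) / q)

/-- A real representative of the angle `θ_χ ∈ ℝ/ℤ` with `ε(χ) = e(θ_χ)`. -/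
def realAngle {q : ℕ} (χ : DirichletCharacter ℂ q) : ℝ :=
  Complex.arg (rootNumber χ) / (2 * Real.pi)

/-- Sum over even primitive Dirichlet characters mod `q`. -/
def evenPrimSum (q : ℕ) (F : DirichletCharacter ℂ q → ℂ) : ℂ :=
  if h : q = 0 then 0 else
    haveI : NeZero q := ⟨h⟩
    ∑ χ : DirichletCharacter ℂ q,
      {χ' : DirichletCharacter ℂ q | χ'.IsPrimitive ∧ χ' (-1) = 1}.indicator F χ

/-- `φ⁺(q)`: the number of even primitive Dirichlet characters mod `q`. -/
def phiPlus (q : ℕ) : ℕ :=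
  Nat.card {χ : DirichletCharacter ℂ q // χ.IsPrimitive ∧ χ (-1) = 1}

/-- `G = ∑_{k ≤ M, (k,q)=1} μ²(k)/φ(k)`. -/
def Gsum (q : ℕ) (M : ℝ) : ℝ :=
  ∑ k ∈ Finset.Icc 1 ⌊M⌋₊,
    if Nat.Coprime k q then ((ArithmeticFunction.moebius k : ℤ) : ℝ) ^ 2 / (Nat.totient k : ℝ)
    else 0

/-- The mollifier coefficients `x_m`. -/
def xcoef (q : ℕ) (M : ℝ) (m : ℕ) : ℝ :=
  if Nat.Coprime m q then
    ((ArithmeticFunction.moebius m : ℤ) : ℝ) * m / (Nat.totient m : ℝ) * (Gsum q M)⁻¹ *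
      ∑ l ∈ Finset.Icc 1 ⌊M / (m : ℝ)⌋₊,
        if Nat.Coprime l (m * q) then
          ((ArithmeticFunction.moebius l : ℤ) : ℝ) ^ 2 / (Nat.totient l : ℝ)
        else 0
  else 0

/-- The mollifier `M(χ) = ∑_{m ≤ M} x_m χ(m) m^{-1/2}`. -/
def mollifier {q : ℕ} (M : ℝ) (χ : DirichletCharacter ℂ q) : ℂ :=
  ∑ m ∈ Finset.Icc 1 ⌊M⌋₊, (xcoef q M m : ℂ) * χ (m : ZMod q) / (Real.sqrt m : ℂ)

namespace TripleConvAux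

noncomputable def ff (m : ℕ) : ℝ :=
  ((ArithmeticFunction.moebius m : ℤ) : ℝ) * (m.divisors.card : ℝ) / (Nat.totient m : ℝ)

noncomputable def gg (m : ℕ) : ℝ :=
  ((ArithmeticFunction.moebius m : ℤ) : ℝ) ^ 2 / (Nat.totient m : ℝ)

lemma ff_one : ff 1 = 1 := by simp [ff]

lemma gg_one : gg 1 = 1 := by simp [gg]

lemma ff_mul {p m : ℕ} (hp : p.Prime) (h : ¬ p ∣ m) : ff (p * m) = ff p * ff m := by
  have hc : Nat.Coprime p m := (Nat.Prime.coprime_iff_not_dvd hp).mpr h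
  unfold ff
  rw [ArithmeticFunction.isMultiplicative_moebius.map_mul_of_coprime hc,
    hc.card_divisors_mul, Nat.totient_mul hc]
  push_cast
  ring

lemma gg_mul {p m : ℕ} (hp : p.Prime) (h : ¬ p ∣ m) : gg (p * m) = gg p * gg m := by
  have hc : Nat.Coprime p m := (Nat.Prime.coprime_iff_not_dvd hp).mpr h
  unfold gg
  rw [ArithmeticFunction.isMultiplicative_moebius.map_mul_of_coprime hc, Nat.totient_mul hc]
  push_cast
  ring

lemma ff_add_two_gg {p : ℕ} (hp : p.Prime) : ff p + 2 * gg p = 0 := by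
  have hτ : (p.divisors.card : ℝ) = 2 := by
    rw [hp.divisors, Finset.card_insert_of_notMem (by simp [hp.one_lt.ne])]; simp
  unfold ff gg
  rw [ArithmeticFunction.moebius_apply_prime hp, hτ]
  push_cast
  ring

lemma ff_zero_of_sq_dvd {p m : ℕ} (hp : p.Prime) (h : p * p ∣ m) : ff m = 0 := by
  have : ¬ Squarefree m := fun hsq => hp.ne_one (Nat.isUnit_iff.mp (hsq p h))
  simp [ff, ArithmeticFunction.moebius_eq_zero_of_not_squarefree this]

lemma gg_zero_of_sq_dvd {p m : ℕ} (hp : p.Prime) (h : p * p ∣ m) : gg m = 0 := by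
  have : ¬ Squarefree m := fun hsq => hp.ne_one (Nat.isUnit_iff.mp (hsq p h))
  simp [gg, ArithmeticFunction.moebius_eq_zero_of_not_squarefree this]

/-- The fiber of triples with product `n`. -/
def fib (M q n : ℕ) : Finset ((ℕ × ℕ) × ℕ) :=
  ((Finset.Icc 1 M ×ˢ Finset.Icc 1 M) ×ˢ Finset.Icc 1 M).filter
    (fun t => t.1.1 * t.1.2 * t.2 = n ∧ Nat.Coprime t.1.1 t.1.2 ∧
      Nat.Coprime t.1.1 t.2 ∧ Nat.Coprime t.1.2 t.2 ∧ Nat.Coprime n q)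

lemma mem_fib {M q n : ℕ} {a b c : ℕ} :
    ((a, b), c) ∈ fib M q n ↔ (1 ≤ a ∧ a ≤ M) ∧ (1 ≤ b ∧ b ≤ M) ∧ (1 ≤ c ∧ c ≤ M) ∧
      a * b * c = n ∧ Nat.Coprime a b ∧ Nat.Coprime a c ∧ Nat.Coprime b c ∧
      Nat.Coprime n q := by
  simp only [fib, Finset.mem_filter, Finset.mem_product, Finset.mem_Icc]
  tauto

lemma fib_one (M q : ℕ) (hM : 1 ≤ M) : fib M q 1 = {((1, 1), 1)} := by
  ext t
  obtain ⟨⟨a, b⟩, c⟩ := t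
  simp only [mem_fib, Finset.mem_singleton, Prod.mk.injEq]
  constructor
  · rintro ⟨-, -, -, hprod, -⟩
    have ha : a = 1 := Nat.dvd_one.mp (hprod ▸ ((dvd_mul_right a b).mul_right c))
    have hb : b = 1 := Nat.dvd_one.mp (hprod ▸ ((dvd_mul_left b a).mul_right c))
    have hc : c = 1 := Nat.dvd_one.mp (hprod ▸ (dvd_mul_left c (a * b)))
    exact ⟨⟨ha, hb⟩, hc⟩
  · rintro ⟨⟨rfl, rfl⟩, rfl⟩
    refine ⟨⟨le_refl 1, hM⟩, ⟨le_refl 1, hM⟩, ⟨le_refl 1, hM⟩, by norm_num, ?_, ?_, ?_, ?_⟩ <;>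
      simp [Nat.coprime_one_left]


lemma slot1 (M q k p : ℕ) (hp : p.Prime) (hpk : ¬ p ∣ k) (hM : p * k ≤ M)
    (hq : Nat.Coprime (p * k) q) :
    ∑ t ∈ (fib M q (p * k)).filter (fun t => p ∣ t.1.1), ff t.1.1 * gg t.1.2 * gg t.2
      = ff p * ∑ t ∈ fib M q k, ff t.1.1 * gg t.1.2 * gg t.2 := by
  rw [Finset.mul_sum]
  refine Finset.sum_bij' (fun t _ => ((t.1.1 / p, t.1.2), t.2))
    (fun t _ => ((p * t.1.1, t.1.2), t.2)) ?_ ?_ ?_ ?_ ?_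
  · rintro ⟨⟨a, b⟩, c⟩ ht
    obtain ⟨hfib, hdvd⟩ := Finset.mem_filter.mp ht
    rw [mem_fib] at hfib
    obtain ⟨⟨ha1, ha2⟩, hb, hc, hprod, h12, h13, h23, hcq⟩ := hfib
    simp only [mem_fib]
    have hdvd : p ∣ a := hdvd
    have hkey : a / p * b * c = k := by
      refine Nat.eq_of_mul_eq_mul_left hp.pos ?_
      calc p * (a / p * b * c) = (p * (a / p)) * b * c := by ring
        _ = a * b * c := by rw [Nat.mul_div_cancel' hdvd]
        _ = p * k := hprod
    refine ⟨⟨(Nat.one_le_div_iff hp.pos).mpr (Nat.le_of_dvd (by omega) hdvd),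
      le_trans (Nat.div_le_self a p) ha2⟩, hb, hc, hkey,
      Nat.Coprime.coprime_dvd_left (Nat.div_dvd_of_dvd hdvd) h12,
      Nat.Coprime.coprime_dvd_left (Nat.div_dvd_of_dvd hdvd) h13, h23,
      Nat.Coprime.coprime_dvd_left (dvd_mul_left k p) hq⟩
  · rintro ⟨⟨a, b⟩, c⟩ ht
    rw [mem_fib] at ht
    obtain ⟨⟨ha1, ha2⟩, ⟨hb1, hb2⟩, ⟨hc1, hc2⟩, hprod, h12, h13, h23, hcq⟩ := ht
    have hbk : b ∣ k := hprod ▸ ((dvd_mul_left b a).mul_right c)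
    have hck : c ∣ k := hprod ▸ (dvd_mul_left c (a * b))
    have cpb : Nat.Coprime p b := (hp.coprime_iff_not_dvd).mpr (fun h => hpk (h.trans hbk))
    have cpc : Nat.Coprime p c := (hp.coprime_iff_not_dvd).mpr (fun h => hpk (h.trans hck))
    refine Finset.mem_filter.mpr ⟨mem_fib.mpr ⟨⟨Nat.mul_pos hp.pos ha1, ?_⟩, ⟨hb1, hb2⟩, ⟨hc1, hc2⟩, ?_,
      Nat.Coprime.mul cpb h12, Nat.Coprime.mul cpc h13, h23, hq⟩, dvd_mul_right p a⟩
    · calc p * a ≤ p * a * (b * c) := Nat.le_mul_of_pos_right _ (by positivity)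
        _ = p * (a * b * c) := by ring
        _ = p * k := by rw [hprod]
        _ ≤ M := hM
    · calc p * a * b * c = p * (a * b * c) := by ring
        _ = p * k := by rw [hprod]
  · rintro ⟨⟨a, b⟩, c⟩ ht
    have hdvd : p ∣ a := (Finset.mem_filter.mp ht).2
    simp [Nat.mul_div_cancel' hdvd]
  · rintro ⟨⟨a, b⟩, c⟩ ht
    simp [Nat.mul_div_cancel_left a hp.pos]
  · rintro ⟨⟨a, b⟩, c⟩ ht
    obtain ⟨hfib, hdvd⟩ := Finset.mem_filter.mp ht
    rw [mem_fib] at hfib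
    obtain ⟨⟨ha1, ha2⟩, hb, hc, hprod, h12, h13, h23, hcq⟩ := hfib
    have hdvd : p ∣ a := hdvd
    have ha : p * (a / p) = a := Nat.mul_div_cancel' hdvd
    have hkey : a / p * b * c = k := by
      refine Nat.eq_of_mul_eq_mul_left hp.pos ?_
      calc p * (a / p * b * c) = (p * (a / p)) * b * c := by ring
        _ = a * b * c := by rw [ha]
        _ = p * k := hprod
    have hnd : ¬ p ∣ (a / p) := fun h =>
      hpk (h.trans (hkey ▸ ((dvd_mul_right (a / p) b).mul_right c)))
    simp only []
    conv_lhs => rw [← ha]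
    rw [ff_mul hp hnd]
    ring

lemma slot2 (M q k p : ℕ) (hp : p.Prime) (hpk : ¬ p ∣ k) (hM : p * k ≤ M)
    (hq : Nat.Coprime (p * k) q) :
    ∑ t ∈ (fib M q (p * k)).filter (fun t => ¬ p ∣ t.1.1 ∧ p ∣ t.1.2),
        ff t.1.1 * gg t.1.2 * gg t.2
      = gg p * ∑ t ∈ fib M q k, ff t.1.1 * gg t.1.2 * gg t.2 := by
  rw [Finset.mul_sum]
  refine Finset.sum_bij' (fun t _ => ((t.1.1, t.1.2 / p), t.2))
    (fun t _ => ((t.1.1, p * t.1.2), t.2)) ?_ ?_ ?_ ?_ ?_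
  · rintro ⟨⟨a, b⟩, c⟩ ht
    obtain ⟨hfib, hcond⟩ := Finset.mem_filter.mp ht
    rw [mem_fib] at hfib
    obtain ⟨ha, ⟨hb1, hb2⟩, hc, hprod, h12, h13, h23, hcq⟩ := hfib
    have hdvd : p ∣ b := hcond.2
    simp only [mem_fib]
    have hkey : a * (b / p) * c = k := by
      refine Nat.eq_of_mul_eq_mul_left hp.pos ?_
      calc p * (a * (b / p) * c) = a * (p * (b / p)) * c := by ring
        _ = a * b * c := by rw [Nat.mul_div_cancel' hdvd]
        _ = p * k := hprod
    refine ⟨ha, ⟨(Nat.one_le_div_iff hp.pos).mpr (Nat.le_of_dvd (by omega) hdvd),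
      le_trans (Nat.div_le_self b p) hb2⟩, hc, hkey,
      Nat.Coprime.coprime_dvd_right (Nat.div_dvd_of_dvd hdvd) h12,
      h13, Nat.Coprime.coprime_dvd_left (Nat.div_dvd_of_dvd hdvd) h23,
      Nat.Coprime.coprime_dvd_left (dvd_mul_left k p) hq⟩
  · rintro ⟨⟨a, b⟩, c⟩ ht
    rw [mem_fib] at ht
    obtain ⟨⟨ha1, ha2⟩, ⟨hb1, hb2⟩, ⟨hc1, hc2⟩, hprod, h12, h13, h23, hcq⟩ := ht
    have hak : a ∣ k := hprod ▸ ((dvd_mul_right a b).mul_right c)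
    have hck : c ∣ k := hprod ▸ (dvd_mul_left c (a * b))
    have cpa : Nat.Coprime p a := (hp.coprime_iff_not_dvd).mpr (fun h => hpk (h.trans hak))
    have cpc : Nat.Coprime p c := (hp.coprime_iff_not_dvd).mpr (fun h => hpk (h.trans hck))
    refine Finset.mem_filter.mpr ⟨mem_fib.mpr ⟨⟨ha1, ha2⟩,
      ⟨Nat.mul_pos hp.pos hb1, ?_⟩, ⟨hc1, hc2⟩, ?_,
      Nat.Coprime.mul_right cpa.symm h12, h13, Nat.Coprime.mul cpc h23, hq⟩,
      fun h => hpk (h.trans hak), dvd_mul_right p b⟩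
    · calc p * b ≤ p * b * (a * c) := Nat.le_mul_of_pos_right _ (by positivity)
        _ = p * (a * b * c) := by ring
        _ = p * k := by rw [hprod]
        _ ≤ M := hM
    · calc a * (p * b) * c = p * (a * b * c) := by ring
        _ = p * k := by rw [hprod]
  · rintro ⟨⟨a, b⟩, c⟩ ht
    have hdvd : p ∣ b := (Finset.mem_filter.mp ht).2.2
    simp [Nat.mul_div_cancel' hdvd]
  · rintro ⟨⟨a, b⟩, c⟩ ht
    simp [Nat.mul_div_cancel_left b hp.pos]
  · rintro ⟨⟨a, b⟩, c⟩ ht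
    obtain ⟨hfib, hcond⟩ := Finset.mem_filter.mp ht
    rw [mem_fib] at hfib
    obtain ⟨ha, hb, hc, hprod, h12, h13, h23, hcq⟩ := hfib
    have hdvd : p ∣ b := hcond.2
    have hbb : p * (b / p) = b := Nat.mul_div_cancel' hdvd
    have hkey : a * (b / p) * c = k := by
      refine Nat.eq_of_mul_eq_mul_left hp.pos ?_
      calc p * (a * (b / p) * c) = a * (p * (b / p)) * c := by ring
        _ = a * b * c := by rw [hbb]
        _ = p * k := hprod
    have hnd : ¬ p ∣ (b / p) := fun h =>
      hpk (h.trans (hkey ▸ ((dvd_mul_left (b / p) a).mul_right c)))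
    simp only []
    conv_lhs => rw [← hbb]
    rw [gg_mul hp hnd]
    ring

lemma slot3 (M q k p : ℕ) (hp : p.Prime) (hpk : ¬ p ∣ k) (hM : p * k ≤ M)
    (hq : Nat.Coprime (p * k) q) :
    ∑ t ∈ (fib M q (p * k)).filter (fun t => ¬ p ∣ t.1.1 ∧ ¬ p ∣ t.1.2),
        ff t.1.1 * gg t.1.2 * gg t.2
      = gg p * ∑ t ∈ fib M q k, ff t.1.1 * gg t.1.2 * gg t.2 := by
  rw [Finset.mul_sum]
  refine Finset.sum_bij' (fun t _ => ((t.1.1, t.1.2), t.2 / p))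
    (fun t _ => ((t.1.1, t.1.2), p * t.2)) ?_ ?_ ?_ ?_ ?_
  · rintro ⟨⟨a, b⟩, c⟩ ht
    obtain ⟨hfib, hcond⟩ := Finset.mem_filter.mp ht
    rw [mem_fib] at hfib
    obtain ⟨ha, hb, ⟨hc1, hc2⟩, hprod, h12, h13, h23, hcq⟩ := hfib
    have hdvd : p ∣ c := by
      have hpabc : p ∣ a * b * c := by rw [hprod]; exact dvd_mul_right p k
      rcases hp.dvd_mul.mp hpabc with h | h
      · rcases hp.dvd_mul.mp h with h | h
        · exact absurd h hcond.1
        · exact absurd h hcond.2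
      · exact h
    simp only [mem_fib]
    have hkey : a * b * (c / p) = k := by
      refine Nat.eq_of_mul_eq_mul_left hp.pos ?_
      calc p * (a * b * (c / p)) = a * b * (p * (c / p)) := by ring
        _ = a * b * c := by rw [Nat.mul_div_cancel' hdvd]
        _ = p * k := hprod
    refine ⟨ha, hb, ⟨(Nat.one_le_div_iff hp.pos).mpr (Nat.le_of_dvd (by omega) hdvd),
      le_trans (Nat.div_le_self c p) hc2⟩, hkey,
      h12, Nat.Coprime.coprime_dvd_right (Nat.div_dvd_of_dvd hdvd) h13,
      Nat.Coprime.coprime_dvd_right (Nat.div_dvd_of_dvd hdvd) h23,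
      Nat.Coprime.coprime_dvd_left (dvd_mul_left k p) hq⟩
  · rintro ⟨⟨a, b⟩, c⟩ ht
    rw [mem_fib] at ht
    obtain ⟨⟨ha1, ha2⟩, ⟨hb1, hb2⟩, ⟨hc1, hc2⟩, hprod, h12, h13, h23, hcq⟩ := ht
    have hak : a ∣ k := hprod ▸ ((dvd_mul_right a b).mul_right c)
    have hbk : b ∣ k := hprod ▸ ((dvd_mul_left b a).mul_right c)
    have cpa : Nat.Coprime p a := (hp.coprime_iff_not_dvd).mpr (fun h => hpk (h.trans hak))
    have cpb : Nat.Coprime p b := (hp.coprime_iff_not_dvd).mpr (fun h => hpk (h.trans hbk))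
    refine Finset.mem_filter.mpr ⟨mem_fib.mpr ⟨⟨ha1, ha2⟩, ⟨hb1, hb2⟩,
      ⟨Nat.mul_pos hp.pos hc1, ?_⟩, ?_,
      h12, Nat.Coprime.mul_right cpa.symm h13, Nat.Coprime.mul_right cpb.symm h23, hq⟩,
      fun h => hpk (h.trans hak), fun h => hpk (h.trans hbk)⟩
    · calc p * c ≤ p * c * (a * b) := Nat.le_mul_of_pos_right _ (by positivity)
        _ = p * (a * b * c) := by ring
        _ = p * k := by rw [hprod]
        _ ≤ M := hM
    · calc a * b * (p * c) = p * (a * b * c) := by ring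
        _ = p * k := by rw [hprod]
  · rintro ⟨⟨a, b⟩, c⟩ ht
    obtain ⟨hfib, hcond⟩ := Finset.mem_filter.mp ht
    rw [mem_fib] at hfib
    obtain ⟨ha, hb, ⟨hc1, hc2⟩, hprod, h12, h13, h23, hcq⟩ := hfib
    have hdvd : p ∣ c := by
      have hpabc : p ∣ a * b * c := by rw [hprod]; exact dvd_mul_right p k
      rcases hp.dvd_mul.mp hpabc with h | h
      · rcases hp.dvd_mul.mp h with h | h
        · exact absurd h hcond.1
        · exact absurd h hcond.2
      · exact h
    simp [Nat.mul_div_cancel' hdvd]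
  · rintro ⟨⟨a, b⟩, c⟩ ht
    simp [Nat.mul_div_cancel_left c hp.pos]
  · rintro ⟨⟨a, b⟩, c⟩ ht
    obtain ⟨hfib, hcond⟩ := Finset.mem_filter.mp ht
    rw [mem_fib] at hfib
    obtain ⟨ha, hb, hc, hprod, h12, h13, h23, hcq⟩ := hfib
    have hdvd : p ∣ c := by
      have hpabc : p ∣ a * b * c := by rw [hprod]; exact dvd_mul_right p k
      rcases hp.dvd_mul.mp hpabc with h | h
      · rcases hp.dvd_mul.mp h with h | h
        · exact absurd h hcond.1
        · exact absurd h hcond.2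
      · exact h
    have hcc : p * (c / p) = c := Nat.mul_div_cancel' hdvd
    have hkey : a * b * (c / p) = k := by
      refine Nat.eq_of_mul_eq_mul_left hp.pos ?_
      calc p * (a * b * (c / p)) = a * b * (p * (c / p)) := by ring
        _ = a * b * c := by rw [hcc]
        _ = p * k := hprod
    have hnd : ¬ p ∣ (c / p) := fun h =>
      hpk (h.trans (hkey ▸ (dvd_mul_left (c / p) (a * b))))
    simp only []
    conv_lhs => rw [← hcc]
    rw [gg_mul hp hnd]
    ring

lemma fib_sum_zero (M q n : ℕ) (hn : 2 ≤ n) (hnM : n ≤ M) :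
    ∑ t ∈ fib M q n, ff t.1.1 * gg t.1.2 * gg t.2 = 0 := by
  by_cases hq : Nat.Coprime n q
  swap
  · rw [show fib M q n = ∅ from Finset.filter_eq_empty_iff.mpr
      (fun _ _ h => hq h.2.2.2.2), Finset.sum_empty]
  set p := n.minFac with hpdef
  have hp : p.Prime := Nat.minFac_prime (by omega)
  have hpn : p ∣ n := Nat.minFac_dvd n
  by_cases hp2 : p * p ∣ n
  · -- every term is zero
    refine Finset.sum_eq_zero ?_
    rintro ⟨⟨a, b⟩, c⟩ ht
    rw [mem_fib] at ht
    obtain ⟨-, -, -, hprod, h12, h13, h23, -⟩ := ht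
    have key : ∀ x y : ℕ, x * y = n → ¬ p ∣ y → p * p ∣ x := by
      intro x y hxy hpy
      have cpy : Nat.Coprime p y := (hp.coprime_iff_not_dvd).mpr hpy
      exact (Nat.Coprime.mul cpy cpy).dvd_of_dvd_mul_right (hxy ▸ hp2)
    have hpabc : p ∣ a * b * c := by rw [hprod]; exact hpn
    rcases hp.dvd_mul.mp hpabc with h | h
    · rcases hp.dvd_mul.mp h with h | h
      · have hpb : ¬ p ∣ b := (hp.coprime_iff_not_dvd).mp (Nat.Coprime.coprime_dvd_left h h12)
        have hpc : ¬ p ∣ c := (hp.coprime_iff_not_dvd).mp (Nat.Coprime.coprime_dvd_left h h13)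
        have := key a (b * c) (by rw [← hprod]; ring) (fun h' => (hp.dvd_mul.mp h').elim hpb hpc)
        simp [ff_zero_of_sq_dvd hp this]
      · have hpa : ¬ p ∣ a := (hp.coprime_iff_not_dvd).mp (Nat.Coprime.coprime_dvd_left h h12.symm)
        have hpc : ¬ p ∣ c := (hp.coprime_iff_not_dvd).mp (Nat.Coprime.coprime_dvd_left h h23)
        have := key b (a * c) (by rw [← hprod]; ring) (fun h' => (hp.dvd_mul.mp h').elim hpa hpc)
        simp [gg_zero_of_sq_dvd hp this]
    · have hpa : ¬ p ∣ a := (hp.coprime_iff_not_dvd).mp (Nat.Coprime.coprime_dvd_left h h13.symm)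
      have hpb : ¬ p ∣ b := (hp.coprime_iff_not_dvd).mp (Nat.Coprime.coprime_dvd_left h h23.symm)
      have := key c (a * b) (by rw [← hprod]; ring) (fun h' => (hp.dvd_mul.mp h').elim hpa hpb)
      simp [gg_zero_of_sq_dvd hp this]
  · -- extraction of the smallest prime
    obtain ⟨k, hk⟩ := hpn
    have hk1 : 1 ≤ k := by
      rcases Nat.eq_zero_or_pos k with h | h
      · subst h; omega
      · exact h
    have hpk : ¬ p ∣ k := by
      rintro ⟨j, hj⟩
      exact hp2 ⟨j, by rw [hk, hj]; ring⟩
    have hM' : p * k ≤ M := by rw [← hk]; exact hnM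
    have hq' : Nat.Coprime (p * k) q := by rw [← hk]; exact hq
    rw [hk]
    rw [← Finset.sum_filter_add_sum_filter_not (fib M q (p * k)) (fun t => p ∣ t.1.1),
      ← Finset.sum_filter_add_sum_filter_not
        ((fib M q (p * k)).filter (fun t => ¬ p ∣ t.1.1)) (fun t => p ∣ t.1.2),
      Finset.filter_filter, Finset.filter_filter]
    rw [slot1 M q k p hp hpk hM' hq', slot2 M q k p hp hpk hM' hq',
      slot3 M q k p hp hpk hM' hq']
    have h0 := ff_add_two_gg hp
    linear_combination (∑ t ∈ fib M q k, ff t.1.1 * gg t.1.2 * gg t.2) * h0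

lemma main_aux (M q : ℕ) (hM : 1 ≤ M) :
    ∑ t ∈ ((Finset.Icc 1 M ×ˢ Finset.Icc 1 M) ×ˢ Finset.Icc 1 M).filter
        (fun t => t.1.1 * t.1.2 * t.2 ≤ M ∧ Nat.Coprime t.1.1 t.1.2 ∧
          Nat.Coprime t.1.1 t.2 ∧ Nat.Coprime t.1.2 t.2 ∧
          Nat.Coprime (t.1.1 * t.1.2 * t.2) q),
      ff t.1.1 * gg t.1.2 * gg t.2 = 1 := by
  set S := ((Finset.Icc 1 M ×ˢ Finset.Icc 1 M) ×ˢ Finset.Icc 1 M).filter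
      (fun t => t.1.1 * t.1.2 * t.2 ≤ M ∧ Nat.Coprime t.1.1 t.1.2 ∧
        Nat.Coprime t.1.1 t.2 ∧ Nat.Coprime t.1.2 t.2 ∧
        Nat.Coprime (t.1.1 * t.1.2 * t.2) q) with hS
  have hmaps : ∀ t ∈ S, t.1.1 * t.1.2 * t.2 ∈ Finset.Icc 1 M := by
    rintro ⟨⟨a, b⟩, c⟩ ht
    simp only [hS, Finset.mem_filter, Finset.mem_product, Finset.mem_Icc] at ht
    obtain ⟨⟨⟨⟨ha1, _⟩, ⟨hb1, _⟩⟩, ⟨hc1, _⟩⟩, hle, -⟩ := ht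
    exact Finset.mem_Icc.mpr ⟨Nat.mul_pos (Nat.mul_pos ha1 hb1) hc1, hle⟩
  rw [← Finset.sum_fiberwise_of_maps_to hmaps (fun t => ff t.1.1 * gg t.1.2 * gg t.2)]
  have hfib : ∀ n ∈ Finset.Icc 1 M,
      S.filter (fun t => t.1.1 * t.1.2 * t.2 = n) = fib M q n := by
    intro n hn
    rw [Finset.mem_Icc] at hn
    ext ⟨⟨a, b⟩, c⟩
    simp only [hS, fib, Finset.filter_filter, Finset.mem_filter, Finset.mem_product,
      Finset.mem_Icc]
    constructor
    · rintro ⟨hmem, ⟨hle, h12, h13, h23, hcq⟩, hprod⟩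
      exact ⟨hmem, hprod, h12, h13, h23, by rw [← hprod]; exact hcq⟩
    · rintro ⟨hmem, hprod, h12, h13, h23, hcq⟩
      exact ⟨hmem, ⟨by rw [hprod]; exact hn.2, h12, h13, h23, by rw [hprod]; exact hcq⟩, hprod⟩
  have hsum : (∑ n ∈ Finset.Icc 1 M, ∑ t ∈ S.filter (fun t => t.1.1 * t.1.2 * t.2 = n),
        ff t.1.1 * gg t.1.2 * gg t.2)
      = ∑ n ∈ Finset.Icc 1 M, ∑ t ∈ fib M q n, ff t.1.1 * gg t.1.2 * gg t.2 :=
    Finset.sum_congr rfl (fun n hn => by rw [hfib n hn])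
  rw [hsum]
  rw [Finset.sum_eq_single_of_mem 1 (Finset.mem_Icc.mpr ⟨le_refl 1, hM⟩)
    (fun n hn hne => fib_sum_zero M q n
      (by rw [Finset.mem_Icc] at hn; omega) (Finset.mem_Icc.mp hn).2)]
  rw [fib_one M q hM, Finset.sum_singleton]
  simp [ff_one, gg_one]

end TripleConvAux

theorem triple_unitary_convolution_identity (M q : ℕ) (hM : 1 ≤ M) (hq : 0 < q) :
    ∑ t ∈ ((Finset.Icc 1 M ×ˢ Finset.Icc 1 M) ×ˢ Finset.Icc 1 M).filter
        (fun t => t.1.1 * t.1.2 * t.2 ≤ M ∧ Nat.Coprime t.1.1 t.1.2 ∧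
          Nat.Coprime t.1.1 t.2 ∧ Nat.Coprime t.1.2 t.2 ∧
          Nat.Coprime (t.1.1 * t.1.2 * t.2) q),
      ((ArithmeticFunction.moebius t.1.1 : ℤ) : ℝ) * (t.1.1.divisors.card : ℝ) *
        ((ArithmeticFunction.moebius t.1.2 : ℤ) : ℝ) ^ 2 *
        ((ArithmeticFunction.moebius t.2 : ℤ) : ℝ) ^ 2 /
        ((Nat.totient t.1.1 : ℝ) * (Nat.totient t.1.2 : ℝ) * (Nat.totient t.2 : ℝ)) = 1 := by
  refine Eq.trans (Finset.sum_congr rfl fun t _ => ?_) (TripleConvAux.main_aux M q hM)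
  unfold TripleConvAux.ff TripleConvAux.gg
  ring

end
end

section
/- Let a : ℕ → ℝ be the multiplicative function supported on squarefree integers determined by a(1) = 1, a(p) = (√p + 3)/(p − 1) for every prime p, and a(n) = 0 if n is not squarefree. Then there is an absolute constant A > 0 such that for all real M ≥ 1, ∑_{n ≤ M} a(n) ≤ A·√M. -/
open scoped Real
open Complex

noncomputable section

section SqfAux
open ArithmeticFunction
open scoped ArithmeticFunction.Moebius ArithmeticFunction.zeta



noncomputable def Af (a : ℕ → ℝ) : ArithmeticFunction ℝ := ⟨fun n => a n * Real.sqrt n, by simp⟩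

noncomputable def Gf (a : ℕ → ℝ) : ArithmeticFunction ℝ := Af a * (μ : ArithmeticFunction ℝ)

lemma Gf_prime_pow {a : ℕ → ℝ} {p k : ℕ} (hp : p.Prime) (hk : 1 ≤ k) :
    Gf a (p ^ k) = Af a (p ^ k) - Af a (p ^ (k - 1)) := by
  have hcast : ∀ j : ℕ, ((μ (p ^ j) : ℤ) : ℝ) = if j = 0 then 1 else if j = 1 then -1 else 0 := by
    intro j
    rcases Nat.eq_zero_or_pos j with hj | hj
    · simp [hj]
    · rw [moebius_apply_prime_pow hp hj.ne']
      rcases eq_or_ne j 1 with h | h <;> simp [h, hj.ne']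
  rw [Gf, ArithmeticFunction.mul_apply]
  simp only [ArithmeticFunction.intCoe_apply]
  rw [
    Nat.sum_divisorsAntidiagonal (f := fun x y => Af a x * ((μ y : ℤ) : ℝ)),
    Nat.sum_divisors_prime_pow hp]
  have hdiv : ∀ i ∈ Finset.range (k + 1), Af a (p ^ i) * ((μ (p ^ k / p ^ i) : ℤ) : ℝ)
      = (if i = k then Af a (p ^ k) else 0) + (if i = k - 1 then -(Af a (p ^ (k - 1))) else 0) := by
    intro i hi
    rw [Finset.mem_range, Nat.lt_succ_iff] at hi
    rw [Nat.pow_div hi hp.pos, hcast]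
    rcases eq_or_ne i k with rfl | hik
    · simp; omega
    · rcases eq_or_ne i (k - 1) with rfl | hik1
      · have : k - (k-1) = 1 := by omega
        rw [this]
        simp [hik]
      · have h0 : k - i ≠ 0 := by omega
        have h1 : k - i ≠ 1 := by omega
        simp [h0, h1, hik, hik1]
  rw [Finset.sum_congr rfl hdiv, Finset.sum_add_distrib, Finset.sum_ite_eq' _ k,
    Finset.sum_ite_eq' _ (k - 1)]
  have hmem1 : k ∈ Finset.range (k + 1) := by simp
  have hmem2 : k - 1 ∈ Finset.range (k + 1) := by simp
  rw [if_pos hmem1, if_pos hmem2]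
  ring

section
variable {a : ℕ → ℝ} (h1 : a 1 = 1)
  (hp : ∀ p : ℕ, p.Prime → a p = (Real.sqrt p + 3) / ((p : ℝ) - 1))
  (hsf : ∀ n : ℕ, ¬ Squarefree n → a n = 0)
  (hmul : ∀ m n : ℕ, Nat.Coprime m n → a (m * n) = a m * a n)

include hsf in
lemma apk_zero {p k : ℕ} (hpp : p.Prime) (hk : 2 ≤ k) : a (p ^ k) = 0 := by
  refine hsf _ fun h => ?_
  have hd : p * p ∣ p ^ k := by
    have : p ^ 2 ∣ p ^ k := pow_dvd_pow p hk
    simpa [sq] using this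
  exact hpp.one_lt.ne' (Nat.isUnit_iff.mp (h p hd))

include h1 hp in
lemma Gf_prime_bounds {p : ℕ} (hpp : p.Prime) :
    0 ≤ Gf a p ∧ Gf a p ≤ 10 / Real.sqrt p := by
  set s : ℝ := Real.sqrt p with hs
  have hs0 : 0 ≤ s := Real.sqrt_nonneg _
  have hp2 : (2 : ℝ) ≤ (p : ℝ) := by exact_mod_cast hpp.two_le
  have hs2 : 2 ≤ s ^ 2 := by
    rw [hs, Real.sq_sqrt (by positivity)]; exact hp2
  have hsden : 0 < s ^ 2 - 1 := by nlinarith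
  have hspos : 0 < s := by nlinarith
  have hpe : (p : ℝ) = s ^ 2 := by rw [hs, Real.sq_sqrt]; positivity
  have e : Gf a p = (3 * s + 1) / (s ^ 2 - 1) := by
    have e1 : Gf a p = Af a p - Af a 1 := by
      simpa using Gf_prime_pow (a := a) (k := 1) hpp le_rfl
    rw [e1]
    simp only [Af, ArithmeticFunction.coe_mk, Nat.cast_one, Real.sqrt_one, h1, hp p hpp, ← hs]
    rw [hpe]
    field_simp
    ring
  constructor
  · rw [e]; positivity
  · rw [e, div_le_div_iff₀ hsden hspos]
    nlinarith [sq_nonneg (s - 1), sq_nonneg s]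

include h1 hp hsf in
lemma Gf_prime_sq_bounds {p : ℕ} (hpp : p.Prime) : |Gf a (p ^ 2)| ≤ 7 := by
  set s : ℝ := Real.sqrt p with hs
  have hs0 : 0 ≤ s := Real.sqrt_nonneg _
  have hp2 : (2 : ℝ) ≤ (p : ℝ) := by exact_mod_cast hpp.two_le
  have hs2 : 2 ≤ s ^ 2 := by
    rw [hs, Real.sq_sqrt (by positivity)]; exact hp2
  have hsden : 0 < s ^ 2 - 1 := by nlinarith
  have hspos : 0 < s := by nlinarith
  have hpe : (p : ℝ) = s ^ 2 := by rw [hs, Real.sq_sqrt]; positivity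
  have e : Gf a (p ^ 2) = -((s ^ 2 + 3 * s) / (s ^ 2 - 1)) := by
    have e1 : Gf a (p ^ 2) = Af a (p ^ 2) - Af a p := by
      simpa using Gf_prime_pow (a := a) (k := 2) hpp (by norm_num)
    rw [e1]
    simp only [Af, ArithmeticFunction.coe_mk]
    rw [apk_zero hsf hpp le_rfl, zero_mul, hp p hpp, ← hs, hpe]
    field_simp
    ring
  rw [e, abs_neg, _root_.abs_of_nonneg (by positivity)]
  rw [div_le_iff₀ hsden]
  nlinarith [sq_nonneg (s - 1), sq_nonneg s]

include hsf in
lemma Gf_prime_cube {p k : ℕ} (hpp : p.Prime) (hk : 3 ≤ k) : Gf a (p ^ k) = 0 := by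
  rw [Gf_prime_pow hpp (by omega)]
  show a (p ^ k) * Real.sqrt (p ^ k : ℕ) - a (p ^ (k-1)) * Real.sqrt (p ^ (k-1) : ℕ) = 0
  rw [apk_zero hsf hpp (by omega), apk_zero hsf hpp (by omega)]
  ring

end


lemma sum_one_div_sqrt_le (K : ℕ) :
    ∑ m ∈ Finset.Icc 1 K, 1 / Real.sqrt m ≤ 2 * Real.sqrt K := by
  induction K with
  | zero => simp
  | succ K ih =>
    rw [Finset.sum_Icc_succ_top (by omega)]
    set s : ℝ := Real.sqrt K with hsdef
    set t : ℝ := Real.sqrt (K + 1 : ℕ) with htdef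
    have hs0 : 0 ≤ s := Real.sqrt_nonneg _
    have ht0 : 0 < t := by
      rw [htdef]
      apply Real.sqrt_pos.mpr
      push_cast; positivity
    have ht2 : t ^ 2 = s ^ 2 + 1 := by
      rw [htdef, hsdef, Real.sq_sqrt (by positivity), Real.sq_sqrt (by positivity)]
      push_cast; ring
    have key : 2 * s + 1 / t ≤ 2 * t := by
      rw [← sub_nonneg]
      have e : 2 * t - (2 * s + 1 / t) = (2 * t ^ 2 - 2 * s * t - 1) / t := by
        field_simp; ring
      rw [e]
      apply div_nonneg _ ht0.le
      nlinarith [sq_nonneg (t - s)]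
    calc ∑ m ∈ Finset.Icc 1 K, 1 / Real.sqrt m + 1 / t ≤ 2 * s + 1 / t := by linarith
    _ ≤ 2 * t := key

lemma sum_inv_cube_sqrt_le (K : ℕ) :
    ∑ n ∈ Finset.Icc 2 K, 1 / ((n : ℝ) * Real.sqrt n) ≤ 2 - 2 / Real.sqrt K := by
  induction K with
  | zero => simp
  | succ K ih =>
    rcases Nat.lt_or_ge K 1 with hK | hK
    · interval_cases K
      simp
    rw [Finset.sum_Icc_succ_top (by omega)]
    set s : ℝ := Real.sqrt K with hsdef
    set t : ℝ := Real.sqrt (K + 1 : ℕ) with htdef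
    have hs1 : 1 ≤ s := by
      rw [hsdef]
      rw [show (1:ℝ) = Real.sqrt 1 by simp]
      apply Real.sqrt_le_sqrt
      exact_mod_cast hK
    have hs0 : 0 < s := by linarith
    have ht2 : t ^ 2 = s ^ 2 + 1 := by
      rw [htdef, hsdef, Real.sq_sqrt (by positivity), Real.sq_sqrt (by positivity)]
      push_cast; ring
    have ht0' : 0 ≤ t := Real.sqrt_nonneg _
    have ht0 : 0 < t := by nlinarith
    have hst : s ≤ t := by nlinarith
    have hA : s * (t - s) ≤ 1 := by nlinarith [mul_pos (add_pos hs0 ht0) ht0]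
    have ht4 : t ^ 4 = (s ^ 2 + 1) ^ 2 := by rw [show t^4 = (t^2)^2 by ring, ht2]
    have hst2 : s ^ 2 * t ^ 2 = s ^ 4 + s ^ 2 := by rw [ht2]; ring
    have hE : 0 ≤ 2 * t ^ 3 - 2 * s * t ^ 2 - s := by
      nlinarith [hA, ht4, hst2, mul_pos (add_pos hs0 ht0) ht0]
    have hcast : ((K + 1 : ℕ) : ℝ) = t ^ 2 := by
      rw [htdef, Real.sq_sqrt (by positivity)]
    have key : 1 / (((K + 1 : ℕ) : ℝ) * t) ≤ 2 / s - 2 / t := by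
      rw [hcast, ← sub_nonneg]
      have e : 2 / s - 2 / t - 1 / (t ^ 2 * t) =
          (2 * t ^ 3 - 2 * s * t ^ 2 - s) / (s * t ^ 3) := by
        field_simp
      rw [e]
      positivity
    push_cast at key ⊢
    calc ∑ n ∈ Finset.Icc 2 K, 1 / ((n : ℝ) * Real.sqrt n) + 1 / ((K + 1 : ℝ) * t)
        ≤ (2 - 2 / s) + (2 / s - 2 / t) := by
          apply add_le_add ih
          convert key using 2
    _ = 2 - 2 / t := by ring


lemma sum_swap_divisors (F : ℕ → ℕ → ℝ) (N : ℕ) :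
    ∑ n ∈ Finset.Icc 1 N, ∑ d ∈ n.divisors, F d n
      = ∑ d ∈ Finset.Icc 1 N, ∑ m ∈ Finset.Icc 1 (N / d), F d (d * m) := by
  rw [Finset.sum_sigma', Finset.sum_sigma']
  refine Finset.sum_nbij' (fun x => ⟨x.2, x.1 / x.2⟩) (fun x => ⟨x.1 * x.2, x.1⟩)
    ?_ ?_ ?_ ?_ ?_
  · rintro ⟨n, d⟩ hx
    simp only [Finset.mem_sigma, Finset.mem_Icc, Nat.mem_divisors] at hx ⊢
    obtain ⟨⟨hn1, hnN⟩, hdvd, hn0⟩ := hx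
    have hd0 : 0 < d := Nat.pos_of_dvd_of_pos hdvd (by omega)
    have hdn : d ≤ n := Nat.le_of_dvd (by omega) hdvd
    refine ⟨⟨hd0, hdn.trans hnN⟩, ?_, Nat.div_le_div_right hnN⟩
    exact Nat.one_le_div_iff hd0 |>.mpr hdn
  · rintro ⟨d, m⟩ hx
    simp only [Finset.mem_sigma, Finset.mem_Icc, Nat.mem_divisors] at hx ⊢
    obtain ⟨⟨hd1, hdN⟩, hm1, hmN⟩ := hx
    have hdm : d * m ≤ N := by
      rw [mul_comm]
      exact (Nat.le_div_iff_mul_le (by omega : 0 < d)).mp hmN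
    have hpos : 0 < d * m := Nat.mul_pos (by omega) (by omega)
    exact ⟨⟨hpos, hdm⟩, Dvd.intro m rfl, hpos.ne'⟩
  · rintro ⟨n, d⟩ hx
    simp only [Finset.mem_sigma, Finset.mem_Icc, Nat.mem_divisors] at hx
    obtain ⟨⟨hn1, hnN⟩, hdvd, hn0⟩ := hx
    simp only [Sigma.mk.inj_iff, heq_eq_eq]
    exact ⟨Nat.mul_div_cancel' hdvd, trivial⟩
  · rintro ⟨d, m⟩ hx
    simp only [Finset.mem_sigma, Finset.mem_Icc] at hx
    simp only [Sigma.mk.inj_iff, heq_eq_eq]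
    exact ⟨trivial, Nat.mul_div_cancel_left m (by omega)⟩
  · rintro ⟨n, d⟩ hx
    simp only [Finset.mem_sigma, Finset.mem_Icc, Nat.mem_divisors] at hx
    obtain ⟨⟨hn1, hnN⟩, hdvd, hn0⟩ := hx
    rw [Nat.mul_div_cancel' hdvd]

section
variable {a : ℕ → ℝ}
  (hGmult : (Gf a).IsMultiplicative)
  (hGp : ∀ p : ℕ, p.Prime → 0 ≤ Gf a p ∧ Gf a p ≤ 10 / Real.sqrt p)
  (hGp2 : ∀ p : ℕ, p.Prime → |Gf a (p ^ 2)| ≤ 7)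
  (hGpk : ∀ p k : ℕ, p.Prime → 3 ≤ k → Gf a (p ^ k) = 0)


include hGmult hGp hGp2 hGpk in
lemma hsum_le (N₀ : ℕ) :
    ∑ d ∈ Finset.Icc 1 N₀, |Gf a d| / d ≤ Real.exp 34 := by
  classical
  set h : ℕ → ℝ := fun n => |Gf a n| / n with hh
  have hnonneg : ∀ n, 0 ≤ h n := fun n => by positivity
  have h1' : h 1 = 1 := by simp [hh, hGmult.map_one]
  have hm' : ∀ {m n : ℕ}, Nat.Coprime m n → h (m * n) = h m * h n := by
    intro m n hc
    simp only [hh]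
    rw [hGmult.map_mul_of_coprime hc, abs_mul, Nat.cast_mul, div_mul_div_comm]
  have hppk : ∀ {p : ℕ}, p.Prime → ∀ k : ℕ, 3 ≤ k → h (p ^ k) = 0 := by
    intro p hp' k hk
    simp [hh, hGpk p k hp' hk]
  have hsumm : ∀ {p : ℕ}, p.Prime → Summable (fun k : ℕ => ‖h (p ^ k)‖) := by
    intro p hp'
    apply summable_of_ne_finset_zero (s := ({0, 1, 2} : Finset ℕ))
    intro k hk
    simp only [Finset.mem_insert, Finset.mem_singleton] at hk
    rw [hppk hp' k (by omega), norm_zero]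
  obtain ⟨-, hhs⟩ := EulerProduct.summable_and_hasSum_smoothNumbers_prod_primesBelow_tsum
      h1' (fun {m n} hc => hm' hc) hsumm (N₀ + 1)
  -- Step 1 : partial sum ≤ Euler product
  have step1 : ∑ d ∈ Finset.Icc 1 N₀, h d
      ≤ ∏ p ∈ (N₀ + 1).primesBelow, ∑' k : ℕ, h (p ^ k) := by
    have hmem : ∀ m ∈ Finset.Icc 1 N₀, m ∈ (N₀ + 1).smoothNumbers := by
      intro m hm
      rw [Finset.mem_Icc] at hm
      exact Nat.mem_smoothNumbers_of_lt (by omega) (by omega)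
    have e1 : ∑ d ∈ Finset.Icc 1 N₀, h d
        = ∑ x ∈ (Finset.Icc 1 N₀).subtype (· ∈ (N₀ + 1).smoothNumbers), h x := by
      rw [Finset.sum_subtype_eq_sum_filter, Finset.filter_true_of_mem hmem]
    rw [e1]
    exact sum_le_hasSum _ (fun i _ => hnonneg i) hhs
  -- Step 2 : each local factor equals 1 + h p + h p²
  have step2 : ∀ p ∈ (N₀ + 1).primesBelow,
      (∑' k : ℕ, h (p ^ k)) = 1 + (h p + h (p ^ 2)) := by
    intro p hpmem
    have hp' : p.Prime := (Nat.mem_primesBelow.mp hpmem).2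
    rw [tsum_eq_sum (s := ({0, 1, 2} : Finset ℕ)) ?_]
    · rw [show ({0, 1, 2} : Finset ℕ) = insert 0 (insert 1 {2}) from rfl,
        Finset.sum_insert (by decide), Finset.sum_insert (by decide),
        Finset.sum_singleton]
      rw [pow_zero, pow_one, h1']
    · intro k hk
      simp only [Finset.mem_insert, Finset.mem_singleton] at hk
      exact hppk hp' k (by omega)
  -- Step 3 : bound the product
  have step3 : ∏ p ∈ (N₀ + 1).primesBelow, (1 + (h p + h (p ^ 2)))
      ≤ Real.exp (∑ p ∈ (N₀ + 1).primesBelow, (h p + h (p ^ 2))) := by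
    rw [Real.exp_sum]
    apply Finset.prod_le_prod
    · intro p _; have := hnonneg p; have := hnonneg (p ^ 2); linarith
    · intro p _
      have := Real.add_one_le_exp (h p + h (p ^ 2))
      linarith
  -- Step 4 : bound the sum over primes
  have step4 : ∑ p ∈ (N₀ + 1).primesBelow, (h p + h (p ^ 2)) ≤ 34 := by
    have hbd : ∀ p ∈ (N₀ + 1).primesBelow,
        h p + h (p ^ 2) ≤ 17 * (1 / ((p : ℝ) * Real.sqrt p)) := by
      intro p hpmem
      obtain ⟨hplt, hp'⟩ := Nat.mem_primesBelow.mp hpmem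
      have hp2 : (2 : ℝ) ≤ (p : ℝ) := by exact_mod_cast hp'.two_le
      have hsq : 0 < Real.sqrt p := Real.sqrt_pos.mpr (by linarith)
      have hppos : (0 : ℝ) < p := by linarith
      have h1p : h p ≤ 10 / ((p : ℝ) * Real.sqrt p) := by
        have := (hGp p hp').2
        have habs : |Gf a p| = Gf a p := abs_of_nonneg (hGp p hp').1
        simp only [hh, habs]
        rw [div_le_div_iff₀ hppos (by positivity)]
        calc Gf a p * ((p : ℝ) * Real.sqrt p) ≤ (10 / Real.sqrt p) * ((p : ℝ) * Real.sqrt p) := by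
              apply mul_le_mul_of_nonneg_right this (by positivity)
        _ = 10 * p := by field_simp
      have h2p : h (p ^ 2) ≤ 7 / ((p : ℝ) * Real.sqrt p) := by
        have := hGp2 p hp'
        simp only [hh]
        have hcast : ((p ^ 2 : ℕ) : ℝ) = (p : ℝ) ^ 2 := by push_cast; ring
        rw [hcast]
        have hsple : Real.sqrt p ≤ (p : ℝ) := by
          calc Real.sqrt p ≤ Real.sqrt ((p:ℝ)^2) := Real.sqrt_le_sqrt (by nlinarith)
          _ = p := Real.sqrt_sq hppos.le
        calc |Gf a (p ^ 2)| / (p : ℝ) ^ 2 ≤ 7 / (p : ℝ) ^ 2 := by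
              have h7 := hGp2 p hp'
              gcongr
        _ ≤ 7 / ((p : ℝ) * Real.sqrt p) := by
              gcongr
              nlinarith
      calc h p + h (p ^ 2) ≤ 10 / ((p : ℝ) * Real.sqrt p) + 7 / ((p : ℝ) * Real.sqrt p) :=
            add_le_add h1p h2p
      _ = 17 * (1 / ((p : ℝ) * Real.sqrt p)) := by ring
    calc ∑ p ∈ (N₀ + 1).primesBelow, (h p + h (p ^ 2))
        ≤ ∑ p ∈ (N₀ + 1).primesBelow, 17 * (1 / ((p : ℝ) * Real.sqrt p)) :=
          Finset.sum_le_sum hbd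
    _ ≤ ∑ n ∈ Finset.Icc 2 N₀, 17 * (1 / ((n : ℝ) * Real.sqrt n)) := by
          apply Finset.sum_le_sum_of_subset_of_nonneg
          · intro p hpmem
            obtain ⟨hplt, hp'⟩ := Nat.mem_primesBelow.mp hpmem
            rw [Finset.mem_Icc]
            exact ⟨hp'.two_le, by omega⟩
          · intro n _ _; positivity
    _ = 17 * ∑ n ∈ Finset.Icc 2 N₀, 1 / ((n : ℝ) * Real.sqrt n) := by
          rw [Finset.mul_sum]
    _ ≤ 17 * 2 := by
          have h2 : ∑ n ∈ Finset.Icc 2 N₀, 1 / ((n : ℝ) * Real.sqrt n) ≤ 2 := by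
            refine (sum_inv_cube_sqrt_le N₀).trans ?_
            have : 0 ≤ 2 / Real.sqrt N₀ := by positivity
            linarith
          linarith
    _ = 34 := by norm_num
  calc ∑ d ∈ Finset.Icc 1 N₀, h d ≤ ∏ p ∈ (N₀ + 1).primesBelow, ∑' k : ℕ, h (p ^ k) := step1
  _ = ∏ p ∈ (N₀ + 1).primesBelow, (1 + (h p + h (p ^ 2))) := Finset.prod_congr rfl step2
  _ ≤ Real.exp (∑ p ∈ (N₀ + 1).primesBelow, (h p + h (p ^ 2))) := step3
  _ ≤ Real.exp 34 := Real.exp_le_exp.mpr step4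

end

section

variable {a : ℕ → ℝ} (h1 : a 1 = 1)
  (hmul : ∀ m n : ℕ, Nat.Coprime m n → a (m * n) = a m * a n)

include h1 hmul in
lemma Af_mult : (Af a).IsMultiplicative := by
  constructor
  · simp [Af, h1]
  · intro m n hc
    simp only [Af, ArithmeticFunction.coe_mk, hmul m n hc, Nat.cast_mul,
      Real.sqrt_mul (Nat.cast_nonneg m)]
    ring

include h1 hmul in
lemma Gf_mult : (Gf a).IsMultiplicative :=
  (Af_mult h1 hmul).mul (isMultiplicative_moebius.intCast (R := ℝ))

include h1 hmul in
lemma sum_Gf (n : ℕ) : ∑ d ∈ n.divisors, Gf a d = Af a n := by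
  have : (Gf a * ζ) = Af a := by
    rw [Gf, mul_assoc, coe_moebius_mul_coe_zeta, mul_one]
  rw [← coe_mul_zeta_apply, this]

end


end SqfAux

theorem squarefree_multiplicative_partial_sums (a : ℕ → ℝ) (h1 : a 1 = 1)
    (hp : ∀ p : ℕ, p.Prime → a p = (Real.sqrt p + 3) / ((p : ℝ) - 1))
    (hsf : ∀ n : ℕ, ¬ Squarefree n → a n = 0)
    (hmul : ∀ m n : ℕ, Nat.Coprime m n → a (m * n) = a m * a n) :
    ∃ A : ℝ, 0 < A ∧ ∀ M : ℝ, 1 ≤ M →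
      (∑ n ∈ Finset.Icc 1 ⌊M⌋₊, a n) ≤ A * Real.sqrt M := by
  refine ⟨2 * Real.exp 34, by positivity, ?_⟩
  intro M hM
  set N₀ := ⌊M⌋₊ with hN
  have hGmult : (Gf a).IsMultiplicative := Gf_mult h1 hmul
  -- rewrite a n via divisor sum of Gf
  have e1 : ∑ n ∈ Finset.Icc 1 N₀, a n
      = ∑ n ∈ Finset.Icc 1 N₀, ∑ d ∈ n.divisors, Gf a d / Real.sqrt n := by
    refine Finset.sum_congr rfl fun n hn => ?_
    rw [Finset.mem_Icc] at hn
    have hs : (0 : ℝ) < Real.sqrt n := by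
      apply Real.sqrt_pos.mpr
      exact_mod_cast Nat.lt_of_lt_of_le Nat.zero_lt_one hn.1
    rw [← Finset.sum_div, sum_Gf h1 hmul n]
    show a n = a n * Real.sqrt n / Real.sqrt n
    rw [mul_div_assoc, div_self hs.ne', mul_one]
  rw [e1, sum_swap_divisors (fun d n => Gf a d / Real.sqrt n) N₀]
  have hMpos : (0 : ℝ) ≤ M := by linarith
  have hsqN : Real.sqrt N₀ ≤ Real.sqrt M := Real.sqrt_le_sqrt (Nat.floor_le hMpos)
  have e2 : ∑ d ∈ Finset.Icc 1 N₀, ∑ m ∈ Finset.Icc 1 (N₀ / d),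
      Gf a d / Real.sqrt ((d * m : ℕ) : ℝ)
      ≤ ∑ d ∈ Finset.Icc 1 N₀, |Gf a d| * (2 * Real.sqrt N₀ / d) := by
    refine Finset.sum_le_sum fun d hd => ?_
    rw [Finset.mem_Icc] at hd
    have hd0 : (0 : ℝ) < d := by exact_mod_cast hd.1
    have hsd : (0 : ℝ) < Real.sqrt d := Real.sqrt_pos.mpr hd0
    set K := N₀ / d with hK
    calc ∑ m ∈ Finset.Icc 1 K, Gf a d / Real.sqrt ((d * m : ℕ) : ℝ)
        ≤ ∑ m ∈ Finset.Icc 1 K, |Gf a d| * (1 / Real.sqrt d * (1 / Real.sqrt m)) := by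
          refine Finset.sum_le_sum fun m hm => ?_
          rw [Finset.mem_Icc] at hm
          have hm0 : (0 : ℝ) < m := by exact_mod_cast hm.1
          have hsm : (0 : ℝ) < Real.sqrt m := Real.sqrt_pos.mpr hm0
          rw [show Real.sqrt (((d * m : ℕ)) : ℝ) = Real.sqrt d * Real.sqrt m by
            push_cast
            exact Real.sqrt_mul (by positivity) _]
          calc Gf a d / (Real.sqrt d * Real.sqrt m)
              ≤ |Gf a d| / (Real.sqrt d * Real.sqrt m) := by
                gcongr
                exact le_abs_self _
          _ = |Gf a d| * (1 / Real.sqrt d * (1 / Real.sqrt m)) := by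
                field_simp
    _ = |Gf a d| * (1 / Real.sqrt d * ∑ m ∈ Finset.Icc 1 K, 1 / Real.sqrt m) := by
          simp only [Finset.mul_sum]
    _ ≤ |Gf a d| * (1 / Real.sqrt d * (2 * Real.sqrt K)) := by
          gcongr
          exact sum_one_div_sqrt_le K
    _ ≤ |Gf a d| * (1 / Real.sqrt d * (2 * (Real.sqrt N₀ / Real.sqrt d))) := by
          gcongr
          calc Real.sqrt K ≤ Real.sqrt ((N₀ : ℝ) / d) := by
                apply Real.sqrt_le_sqrt
                exact_mod_cast Nat.cast_div_le
          _ = Real.sqrt N₀ / Real.sqrt d := Real.sqrt_div (by positivity) _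
    _ = |Gf a d| * (2 * Real.sqrt N₀ / d) := by
          rw [show ((d : ℝ)) = Real.sqrt d * Real.sqrt d from (Real.mul_self_sqrt hd0.le).symm]
          field_simp
          rw [Real.sqrt_sq hsd.le]
  refine e2.trans ?_
  have e3 : ∑ d ∈ Finset.Icc 1 N₀, |Gf a d| * (2 * Real.sqrt N₀ / d)
      = 2 * Real.sqrt N₀ * ∑ d ∈ Finset.Icc 1 N₀, |Gf a d| / d := by
    rw [Finset.mul_sum]
    refine Finset.sum_congr rfl fun d _ => ?_
    ring
  rw [e3]
  have e4 := hsum_le hGmult (fun p hpp => Gf_prime_bounds h1 hp hpp)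
      (fun p hpp => Gf_prime_sq_bounds h1 hp hsf hpp)
      (fun p k hpp hk => Gf_prime_cube hsf hpp hk) N₀
  calc 2 * Real.sqrt N₀ * ∑ d ∈ Finset.Icc 1 N₀, |Gf a d| / d
      ≤ 2 * Real.sqrt N₀ * Real.exp 34 := by
        have hnn : (0:ℝ) ≤ 2 * Real.sqrt N₀ := by positivity
        exact mul_le_mul_of_nonneg_left e4 hnn
  _ ≤ 2 * Real.exp 34 * Real.sqrt M := by
        have : (0:ℝ) < Real.exp 34 := Real.exp_pos _
        nlinarith [Real.sqrt_nonneg (N₀ : ℝ)]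

end
end

section
/- Let q be a positive integer and m an integer with gcd(m,q) = 1. Then ∑⁺_{χ mod q} χ(m) = (1/2)·∑_{vw = q, m ≡ 1 (mod w)} μ(v)φ(w) + (1/2)·∑_{vw = q, m ≡ −1 (mod w)} μ(v)φ(w), where in each sum (v,w) runs over ordered pairs of positive integers with vw = q satisfying the stated congruence. -/
open scoped Real
open Complex

section Aux


open DirichletCharacter
open scoped Classical

lemma unitsMap_eq_one_iff {n : ℕ} [NeZero n] {d : ℕ} (hd : d ∣ n) (u : (ZMod n)ˣ) :
    ZMod.unitsMap hd u = 1 ↔ (((u : ZMod n).val : ZMod d) = 1) := by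
  rw [ZMod.unitsMap_def]
  constructor
  · intro h
    have := congrArg (Units.val) h
    simpa [ZMod.natCast_val, ZMod.castHom_apply, ZMod.cast_id] using this
  · intro h
    ext
    simpa [ZMod.natCast_val, ZMod.castHom_apply] using h

lemma unitsMap_val {n : ℕ} [NeZero n] {d : ℕ} (hd : d ∣ n) (u : (ZMod n)ˣ) :
    ((ZMod.unitsMap hd u : ZMod d)) = ((((u : ZMod n).val : ℤ)) : ZMod d) := by
  rw [ZMod.unitsMap_def]
  simp [ZMod.natCast_val, ZMod.castHom_apply]

lemma factorsThrough_gcd {n : ℕ} [NeZero n] (χ : DirichletCharacter ℂ n) {d₁ d₂ : ℕ}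
    (h₁ : χ.FactorsThrough d₁) (h₂ : χ.FactorsThrough d₂) :
    χ.FactorsThrough (Nat.gcd d₁ d₂) := by
  have hd₁ : d₁ ∣ n := h₁.dvd
  have hd₂ : d₂ ∣ n := h₂.dvd
  set g : ℕ := Nat.gcd d₁ d₂ with hg
  have hgn : g ∣ n := (Nat.gcd_dvd_left d₁ d₂).trans hd₁
  rw [factorsThrough_iff_ker_unitsMap hgn]
  intro u hu
  rw [MonoidHom.mem_ker, unitsMap_eq_one_iff] at hu
  set z : ℤ := ((u : ZMod n).val : ℤ) with hz
  have hzco : Nat.Coprime (u : ZMod n).val n := ZMod.val_coe_unit_coprime u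
  have hgz : (g : ℤ) ∣ z - 1 := by
    have : ((z - 1 : ℤ) : ZMod g) = 0 := by rw [hz]; push_cast; rw [hu]; ring
    exact (ZMod.intCast_zmod_eq_zero_iff_dvd _ _).mp this
  obtain ⟨c, hc⟩ := hgz
  have hbez : (g : ℤ) = d₁ * Nat.gcdA d₁ d₂ + d₂ * Nat.gcdB d₁ d₂ := Nat.gcd_eq_gcd_ab d₁ d₂
  set w : ℤ := z - c * (d₁ * Nat.gcdA d₁ d₂) with hw
  have hw1 : (d₁ : ℤ) ∣ z - w := ⟨c * Nat.gcdA d₁ d₂, by ring⟩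
  have hw2 : (d₂ : ℤ) ∣ w - 1 := by
    refine ⟨c * Nat.gcdB d₁ d₂, ?_⟩
    have : w - 1 = (z - 1) - c * ((g:ℤ) - d₂ * Nat.gcdB d₁ d₂) := by rw [hbez]; ring
    rw [this, hc]; ring
  -- w is coprime to d₁ and d₂
  have hcop1 : IsCoprime w (d₁ : ℤ) := by
    have h1 : IsCoprime z (d₁ : ℤ) := by
      rw [hz, Nat.isCoprime_iff_coprime]
      exact Nat.Coprime.coprime_dvd_right hd₁ hzco
    have hrw : w = z + (d₁ : ℤ) * (-(c * Nat.gcdA d₁ d₂)) := by rw [hw]; ring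
    rw [hrw]
    exact h1.add_mul_left_left _
  have hcop2 : IsCoprime w (d₂ : ℤ) := by
    obtain ⟨e, he⟩ := hw2
    have h1 : IsCoprime (1 : ℤ) (d₂ : ℤ) := isCoprime_one_left
    have hrw : w = 1 + (d₂ : ℤ) * e := by rw [← he]; ring
    rw [hrw]
    exact h1.add_mul_left_left _
  set L : ℕ := Nat.lcm d₁ d₂ with hL
  have hLn : L ∣ n := Nat.lcm_dvd hd₁ hd₂
  have hcopL : IsCoprime w (L : ℤ) := by
    refine IsCoprime.of_isCoprime_of_dvd_right ?_ (Int.natCast_dvd_natCast.mpr (Nat.lcm_dvd (Nat.dvd_mul_right d₁ d₂) (Nat.dvd_mul_left d₂ d₁)))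
    push_cast
    exact hcop1.mul_right hcop2
  -- w is a unit mod L
  have hWu : IsUnit ((w : ZMod L)) := by
    obtain ⟨a, b, hab⟩ := hcopL
    refine IsUnit.of_mul_eq_one ((a : ZMod L)) ?_
    have := congrArg (fun t : ℤ => (t : ZMod L)) hab
    push_cast at this
    simpa [ZMod.natCast_self, mul_comm] using this
  obtain ⟨W, hWlift⟩ := ZMod.unitsMap_surjective hLn hWu.unit
  have key : ∀ (d : ℕ) (hdn : d ∣ n) (hdL : d ∣ L), ((ZMod.unitsMap hdn W : ZMod d)) = ((w : ZMod d)) := by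
    intro d hdn hdL
    have h1 : ZMod.unitsMap hdn W = ZMod.unitsMap hdL (ZMod.unitsMap hLn W) := by
      rw [← MonoidHom.comp_apply, ZMod.unitsMap_comp]
    rw [h1, hWlift, ZMod.unitsMap_def]
    have h2 : (hWu.unit : ZMod L) = (w : ZMod L) := hWu.unit_spec
    simp only [Units.coe_map, MonoidHom.coe_coe, h2, map_intCast]
  have hzw : ∀ (d : ℕ), (d:ℤ) ∣ z - w → ((z : ZMod d)) = ((w : ZMod d)) := by
    intro d hd
    have := (ZMod.intCast_zmod_eq_zero_iff_dvd (z - w) d).mpr hd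
    push_cast at this
    linear_combination this
  have hud1 : ZMod.unitsMap hd₁ (u * W⁻¹) = 1 := by
    have heq : ZMod.unitsMap hd₁ u = ZMod.unitsMap hd₁ W := by
      ext
      rw [unitsMap_val hd₁ u, key d₁ hd₁ (Nat.dvd_lcm_left _ _)]
      exact hzw d₁ hw1
    rw [map_mul, map_inv, heq, mul_inv_cancel]
  have hud2 : ZMod.unitsMap hd₂ W = 1 := by
    ext
    rw [key d₂ hd₂ (Nat.dvd_lcm_right _ _)]
    have := (ZMod.intCast_zmod_eq_zero_iff_dvd (w - 1) d₂).mpr hw2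
    push_cast at this
    have h3 : ((w : ZMod d₂)) = 1 := by linear_combination this
    simpa using h3
  have hk1 := (factorsThrough_iff_ker_unitsMap hd₁).mp h₁
  have hk2 := (factorsThrough_iff_ker_unitsMap hd₂).mp h₂
  have hsplit : u = (u * W⁻¹) * W := by group
  rw [MonoidHom.mem_ker, hsplit, map_mul]
  rw [show χ.toUnitHom (u * W⁻¹) = 1 from hk1 (MonoidHom.mem_ker.mpr hud1),
      show χ.toUnitHom W = 1 from hk2 (MonoidHom.mem_ker.mpr hud2), mul_one]

lemma conductor_changeLevel {n d : ℕ} [NeZero n] (hd : d ∣ n) (ψ : DirichletCharacter ℂ d)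
    (hψ : ψ.IsPrimitive) : conductor (changeLevel hd ψ) = d := by
  set χ := changeLevel hd ψ with hχ
  have hcd : χ.FactorsThrough (conductor χ) := factorsThrough_conductor χ
  have hfd : χ.FactorsThrough d := ⟨hd, ψ, rfl⟩
  have hfg := factorsThrough_gcd χ hcd hfd
  set g := Nat.gcd (conductor χ) d with hg
  obtain ⟨hgn, χg, hχg⟩ := hfg
  have hgd : g ∣ d := Nat.gcd_dvd_right _ _
  -- ψ = changeLevel hgd χg
  have hinj : ψ = changeLevel hgd χg := by
    refine changeLevel_injective (R := ℂ) hd ?_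
    rw [← hχ, ← changeLevel_trans]
    exact hχg
  have hψg : ψ.FactorsThrough g := ⟨hgd, χg, hinj⟩
  have h1 : d ≤ g := by
    rw [← hψ]
    exact Nat.sInf_le hψg
  have h2 : g = d := Nat.le_antisymm (Nat.le_of_dvd (by
    rcases Nat.eq_zero_or_pos d with h | h
    · exact absurd (Nat.eq_zero_of_zero_dvd (h ▸ hd)) (NeZero.ne n)
    · exact h) hgd) h1
  have h3 : d ∣ conductor χ := h2 ▸ Nat.gcd_dvd_left _ _
  have h4 : conductor χ ≤ d := Nat.sInf_le hfd
  exact Nat.le_antisymm h4 (Nat.le_of_dvd (Nat.pos_of_ne_zero (conductor_ne_zero χ)) h3)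

lemma cast_int_zmod {n d : ℕ} (hd : d ∣ n) (m : ℤ) :
    (ZMod.cast ((m : ZMod n)) : ZMod d) = (m : ZMod d) := by
  rw [← ZMod.castHom_apply (h := hd), map_intCast]

lemma sum_chars_eq_sum_primitive (n : ℕ) [NeZero n] (m : ℤ)
    (hm : IsUnit ((m : ZMod n))) :
    ∑ χ : DirichletCharacter ℂ n, χ ((m : ZMod n)) =
      ∑ d ∈ n.divisors,
        ∑ ψ : DirichletCharacter ℂ d, (if ψ.IsPrimitive then ψ ((m : ZMod d)) else 0) := by
  rw [← Finset.sum_fiberwise_of_maps_to (g := fun χ : DirichletCharacter ℂ n => conductor χ)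
      (fun χ _ => Nat.mem_divisors.mpr ⟨conductor_dvd_level χ, NeZero.ne n⟩)]
  refine Finset.sum_congr rfl fun d hd => ?_
  obtain ⟨hdn, hn0⟩ := Nat.mem_divisors.mp hd
  rw [← Finset.sum_filter]
  refine (Finset.sum_nbij (i := fun ψ => changeLevel hdn ψ) ?_ ?_ ?_ ?_).symm
  · intro ψ hψ
    simp only [Finset.mem_filter, Finset.mem_univ, true_and] at hψ ⊢
    exact conductor_changeLevel hdn ψ hψ
  · exact (changeLevel_injective hdn).injOn
  · intro χ hχ
    simp only [Finset.coe_filter, Finset.mem_univ, true_and, Set.mem_setOf_eq] at hχ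
    have hft : χ.FactorsThrough d := hχ ▸ factorsThrough_conductor χ
    obtain ⟨hdvd, ψ, hψ⟩ := hft
    refine ⟨ψ, ?_, hψ.symm⟩
    simp only [Finset.coe_filter, Finset.mem_univ, true_and, Set.mem_setOf_eq]
    -- ψ is primitive
    have h1 : conductor ψ ∣ d := conductor_dvd_level ψ
    have h2 : χ.FactorsThrough (conductor ψ) := by
      obtain ⟨h₀, ψ₀, hψ₀⟩ := factorsThrough_conductor ψ
      refine ⟨h₀.trans hdvd, ψ₀, ?_⟩
      rw [changeLevel_trans ψ₀ h₀ hdvd, ← hψ₀, ← hψ]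
    have h3 : d ≤ conductor ψ := by
      exact hχ.symm.trans_le (Nat.sInf_le (χ.mem_conductorSet_iff.mpr h2))
    exact Nat.le_antisymm (Nat.le_of_dvd (Nat.pos_of_ne_zero fun h0 => hn0
      (Nat.eq_zero_of_zero_dvd (h0 ▸ hdn))) h1) h3
  · intro ψ hψ
    have hmu : IsUnit ((m : ZMod n)) := hm
    rw [show ((m : ZMod n)) = (hmu.unit : ZMod n) from hmu.unit_spec.symm,
      changeLevel_eq_cast_of_dvd, hmu.unit_spec, cast_int_zmod hdn]

private noncomputable def Fm (m : ℤ) (n : ℕ) : ℂ :=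
  if h : n = 0 then 0 else
    haveI : NeZero n := ⟨h⟩
    ∑ ψ : DirichletCharacter ℂ n, if ψ.IsPrimitive then ψ ((m : ZMod n)) else 0

private noncomputable def Gm (m : ℤ) (n : ℕ) : ℂ := if ((m : ZMod n)) = 1 then (n.totient : ℂ) else 0

lemma isUnit_of_coprime_dvd {q n : ℕ} (m : ℤ) (hm : Int.gcd m q = 1) (hn : n ∣ q) :
    IsUnit ((m : ZMod n)) := by
  have hco : IsCoprime (m : ℤ) (q : ℤ) := Int.isCoprime_iff_gcd_eq_one.mpr hm
  have hcn : IsCoprime (m : ℤ) (n : ℤ) :=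
    IsCoprime.of_isCoprime_of_dvd_right hco (Int.natCast_dvd_natCast.mpr hn)
  obtain ⟨a, b, hab⟩ := hcn
  refine IsUnit.of_mul_eq_one ((a : ZMod n)) ?_
  have := congrArg (fun t : ℤ => (t : ZMod n)) hab
  push_cast at this
  simpa [ZMod.natCast_self, mul_comm] using this

lemma mobius_step (q : ℕ) (hq : 0 < q) (m : ℤ) (hm : Int.gcd m q = 1) :
    Fm m q = ∑ w ∈ q.divisors, ((ArithmeticFunction.moebius (q / w) : ℤ) : ℂ) * Gm m w := by
  have hdvdset : ∀ a b : ℕ, a ∣ b → b ∈ {n : ℕ | n ∣ q} → a ∈ {n : ℕ | n ∣ q} :=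
    fun a b hab hbq => hab.trans hbq
  have hE : ∀ n > 0, n ∈ {n : ℕ | n ∣ q} → ∑ d ∈ n.divisors, Fm m d = Gm m n := by
    intro n hn hnq
    haveI : NeZero n := ⟨hn.ne'⟩
    rw [Gm, ← DirichletCharacter.sum_characters_eq ℂ ((m : ZMod n)),
      sum_chars_eq_sum_primitive n m (isUnit_of_coprime_dvd m hm hnq)]
    refine Finset.sum_congr rfl fun d hd => ?_
    rw [Fm, dif_neg (Nat.pos_of_mem_divisors hd).ne']
  have hMob := (ArithmeticFunction.sum_eq_iff_sum_mul_moebius_eq_on {n : ℕ | n ∣ q}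
    hdvdset).mp hE q hq (dvd_refl q)
  rw [← hMob]
  exact Nat.sum_divisorsAntidiagonal' (f := fun x y => ((ArithmeticFunction.moebius x : ℤ) : ℂ) * Gm m y)

theorem orthogonality_aux (q : ℕ) (hq : 0 < q)
    (m : ℤ) (hm : Int.gcd m q = 1) :
    (if h : q = 0 then 0 else
      haveI : NeZero q := ⟨h⟩
      ∑ χ : DirichletCharacter ℂ q,
        {χ' : DirichletCharacter ℂ q | χ'.IsPrimitive ∧ χ' (-1) = 1}.indicator
          (fun χ => χ ((m : ZMod q))) χ) =
      (((1 / 2 : ℝ) * ∑ w ∈ q.divisors,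
          (if (m : ZMod w) = 1 then
            ((ArithmeticFunction.moebius (q / w) : ℤ) : ℝ) * (Nat.totient w : ℝ) else 0) +
        (1 / 2 : ℝ) * ∑ w ∈ q.divisors,
          (if (m : ZMod w) = -1 then
            ((ArithmeticFunction.moebius (q / w) : ℤ) : ℝ) * (Nat.totient w : ℝ) else 0) : ℝ)
        : ℂ) := by
  have hq0 : q ≠ 0 := hq.ne'
  haveI : NeZero q := ⟨hq0⟩
  rw [dif_neg hq0]
  have key : ∀ χ : DirichletCharacter ℂ q,
      ({χ' : DirichletCharacter ℂ q | χ'.IsPrimitive ∧ χ' (-1) = 1}.indicator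
        (fun χ => χ ((m : ZMod q))) χ)
      = (1/2 : ℂ) * ((if χ.IsPrimitive then χ ((m : ZMod q)) else 0)
          + (if χ.IsPrimitive then χ (((-m : ℤ) : ZMod q)) else 0)) := by
    intro χ
    have hcast : (((-m : ℤ) : ZMod q)) = (-1) * ((m : ZMod q)) := by push_cast; ring
    have hneg : χ (((-m : ℤ) : ZMod q)) = χ (-1) * χ ((m : ZMod q)) := by
      rw [hcast, map_mul]
    rw [Set.indicator_apply]
    by_cases hp : χ.IsPrimitive
    · by_cases he : χ (-1) = 1
      · rw [if_pos (Set.mem_setOf_eq ▸ ⟨hp, he⟩), if_pos hp, if_pos hp, hneg, he]; ring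
      · have hsq : χ (-1) * χ (-1) = 1 := by
          rw [← map_mul]; norm_num
        have hm1 : χ (-1) = -1 := (mul_self_eq_one_iff.mp hsq).resolve_left he
        rw [if_neg (by simp [Set.mem_setOf_eq]; tauto), if_pos hp, if_pos hp, hneg, hm1]; ring
    · rw [if_neg (by simp [Set.mem_setOf_eq]; tauto), if_neg hp, if_neg hp]; ring
  rw [Finset.sum_congr rfl fun χ _ => key χ]
  rw [← Finset.mul_sum, Finset.sum_add_distrib]
  have hF1 : ∑ χ : DirichletCharacter ℂ q, (if χ.IsPrimitive then χ ((m : ZMod q)) else 0)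
      = Fm m q := by rw [Fm, dif_neg hq0]
  have hF2 : ∑ χ : DirichletCharacter ℂ q, (if χ.IsPrimitive then χ (((-m : ℤ) : ZMod q)) else 0)
      = Fm (-m) q := by rw [Fm, dif_neg hq0]
  have hmneg : Int.gcd (-m) q = 1 := by
    rwa [Int.gcd, Int.natAbs_neg, ← Int.gcd]
  rw [hF1, hF2, mobius_step q hq m hm, mobius_step q hq (-m) hmneg]
  rw [Complex.ofReal_add, Complex.ofReal_mul, Complex.ofReal_mul,
    Complex.ofReal_sum, Complex.ofReal_sum]
  have e1 : ∀ w ∈ q.divisors,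
      ((ArithmeticFunction.moebius (q / w) : ℤ) : ℂ) * Gm m w =
      ((if (m : ZMod w) = 1 then
        ((ArithmeticFunction.moebius (q / w) : ℤ) : ℝ) * (Nat.totient w : ℝ) else 0 : ℝ) : ℂ) := by
    intro w _
    rw [Gm]
    split_ifs with h
    · push_cast; ring
    · push_cast; ring
  have e2 : ∀ w ∈ q.divisors,
      ((ArithmeticFunction.moebius (q / w) : ℤ) : ℂ) * Gm (-m) w =
      ((if (m : ZMod w) = -1 then
        ((ArithmeticFunction.moebius (q / w) : ℤ) : ℝ) * (Nat.totient w : ℝ) else 0 : ℝ) : ℂ) := by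
    intro w _
    rw [Gm]
    have hiff : (((-m : ℤ) : ZMod w)) = 1 ↔ ((m : ZMod w)) = -1 := by
      rw [Int.cast_neg, neg_eq_iff_eq_neg]
    rw [if_congr hiff rfl rfl]
    split_ifs with h
    · push_cast; ring
    · push_cast; ring
  rw [Finset.sum_congr rfl e1, Finset.sum_congr rfl e2]
  push_cast
  ring

end Aux

noncomputable section

theorem orthogonality_even_primitive (q : ℕ) (hq : 0 < q)
    (m : ℤ) (hm : Int.gcd m q = 1) :
    evenPrimSum q (fun χ => χ (m : ZMod q)) =
      (((1 / 2 : ℝ) * ∑ w ∈ q.divisors,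
          (if (m : ZMod w) = 1 then
            ((ArithmeticFunction.moebius (q / w) : ℤ) : ℝ) * (Nat.totient w : ℝ) else 0) +
        (1 / 2 : ℝ) * ∑ w ∈ q.divisors,
          (if (m : ZMod w) = -1 then
            ((ArithmeticFunction.moebius (q / w) : ℤ) : ℝ) * (Nat.totient w : ℝ) else 0) : ℝ)
        : ℂ) := by
  unfold evenPrimSum
  exact orthogonality_aux q hq m hm

end
end
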